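/- Let $\{A_i\}_{i\in I}$ be a filtered direct system of commutative rings with direct limit $A$. Let $E$ be a finitely presented $A$-module, and suppose $E_{i_0}$ is a finitely presented $A_{i_0}$-module and $E_{i_1}$ is a finitely presented $A_{i_1}$-module such that $A \otimes_{A_{i_0}} E_{i_0} \cong E$ and $A \otimes_{A_{i_1}} E_{i_1} \cong E$ as $A$-modules. Then there exists an index $i_2 \in I$ with $i_2 \ge i_0$ and $i_2 \ge i_1$ such that $A_{i_2} \otimes_{A_{i_0}} E_{i_0} \cong A_{i_2} \otimes_{A_{i_1}} E_{i_1}$ as $A_{i_2}$-modules. -/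

import Mathlib

open TensorProduct
set_option maxHeartbeats 1000000
set_option synthInstance.maxHeartbeats 200000
namespace FPModel
section Semilinear
variable {R S T M : Type} [CommRing R] [CommRing S] [CommRing T] [Algebra R S] [Algebra R T]
  [AddCommGroup M] [Module R M]
lemma rTensor_smul_alg (w : S →ₐ[R] T) (s : S) (t : S ⊗[R] M) :
    LinearMap.rTensor M w.toLinearMap (s • t) = w s • LinearMap.rTensor M w.toLinearMap t := by
  induction t with
  | zero => simp
  | tmul a m =>
      simp only [TensorProduct.smul_tmul', LinearMap.rTensor_tmul, AlgHom.toLinearMap_apply,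
        smul_eq_mul, map_mul]
  | add x y hx hy => simp [smul_add, hx, hy]
end Semilinear

section System

variable {J : Type} [Preorder J] [IsDirected J (· ≤ ·)] [Nonempty J]
  {R : Type} [CommRing R]
  {S : J → Type} [∀ j, CommRing (S j)] [∀ j, Algebra R (S j)]
  (g : ∀ i j : J, i ≤ j → (S i →ₐ[R] S j))
  {B : Type} [CommRing B] [Algebra R B] (v : ∀ j, S j →ₐ[R] B)
  (M : Type) [AddCommGroup M] [Module R M]

lemma rTensor_v_g (hv : ∀ i j (h : i ≤ j) (x : S i), v j (g i j h x) = v i x)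
    (j j' : J) (h : j ≤ j') (t : S j ⊗[R] M) :
    LinearMap.rTensor M (v j').toLinearMap (LinearMap.rTensor M (g j j' h).toLinearMap t)
      = LinearMap.rTensor M (v j).toLinearMap t := by
  rw [← LinearMap.comp_apply, ← LinearMap.rTensor_comp]
  have he : (v j').toLinearMap ∘ₗ (g j j' h).toLinearMap = (v j).toLinearMap :=
    LinearMap.ext fun x => hv _ _ h x
  rw [he]

lemma rTensor_g_g
    (hg₂ : ∀ (i j k : J) (hij : i ≤ j) (hjk : j ≤ k) (x : S i),
      g j k hjk (g i j hij x) = g i k (hij.trans hjk) x)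
    (i j k : J) (hij : i ≤ j) (hjk : j ≤ k) (t : S i ⊗[R] M) :
    LinearMap.rTensor M (g j k hjk).toLinearMap (LinearMap.rTensor M (g i j hij).toLinearMap t)
      = LinearMap.rTensor M (g i k (hij.trans hjk)).toLinearMap t := by
  rw [← LinearMap.comp_apply, ← LinearMap.rTensor_comp]
  have he : (g j k hjk).toLinearMap ∘ₗ (g i j hij).toLinearMap
      = (g i k (hij.trans hjk)).toLinearMap := LinearMap.ext fun x => hg₂ _ _ _ hij hjk x
  rw [he]

/-- Lemma A: surjectivity. -/
lemma exists_rTensor_eq (hv : ∀ i j (h : i ≤ j) (x : S i), v j (g i j h x) = v i x)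
    (hsurj : ∀ b : B, ∃ j x, v j x = b) (x : B ⊗[R] M) :
    ∃ (j : J) (y : S j ⊗[R] M), LinearMap.rTensor M (v j).toLinearMap y = x := by
  induction x with
  | zero => exact ⟨Classical.arbitrary J, 0, by simp⟩
  | tmul b m =>
      obtain ⟨j, s, rfl⟩ := hsurj b
      exact ⟨j, s ⊗ₜ m, by simp⟩
  | add x y hx hy =>
      obtain ⟨j₁, y₁, rfl⟩ := hx
      obtain ⟨j₂, y₂, rfl⟩ := hy
      obtain ⟨j, h₁, h₂⟩ := directed_of (· ≤ ·) j₁ j₂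
      refine ⟨j, LinearMap.rTensor M (g j₁ j h₁).toLinearMap y₁
        + LinearMap.rTensor M (g j₂ j h₂).toLinearMap y₂, ?_⟩
      rw [map_add, rTensor_v_g g v M hv, rTensor_v_g g v M hv]


/-- Lemma B: elements vanishing in the colimit vanish at a finite stage. -/
lemma rTensor_zero_exact
    (hg₁ : ∀ i x, g i i le_rfl x = x)
    (hg₂ : ∀ (i j k : J) (hij : i ≤ j) (hjk : j ≤ k) (x : S i),
      g j k hjk (g i j hij x) = g i k (hij.trans hjk) x)
    (hv : ∀ i j (h : i ≤ j) (x : S i), v j (g i j h x) = v i x)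
    (hsurj : ∀ b : B, ∃ j x, v j x = b)
    (heq : ∀ j (x y : S j), v j x = v j y → ∃ (j' : J) (h : j ≤ j'), g j j' h x = g j j' h y)
    (j : J) (y : S j ⊗[R] M)
    (h0 : LinearMap.rTensor M (v j).toLinearMap y = 0) :
    ∃ (j' : J) (h : j ≤ j'), LinearMap.rTensor M (g j j' h).toLinearMap y = 0 := by
  classical
  let gl : ∀ i j : J, i ≤ j → (S i →ₗ[R] S j) := fun i j h => (g i j h).toLinearMap
  haveI hds : DirectedSystem S (fun i j h => gl i j h) := by
    constructor
    · intro i x; exact hg₁ i x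
    · intro k j i hij hjk x; exact hg₂ i j k hij hjk x
  let w : Module.DirectLimit S gl →ₗ[R] B :=
    Module.DirectLimit.lift R J S gl (fun j => (v j).toLinearMap) (fun i j hij x => hv i j hij x)
  have hwof : ∀ (i : J) (x : S i), w (Module.DirectLimit.of R J S gl i x) = v i x := fun i x =>
    Module.DirectLimit.lift_of _ _ _
  have hwbij : Function.Bijective w := by
    constructor
    · rw [injective_iff_map_eq_zero]
      intro z hz
      obtain ⟨i, x, rfl⟩ := Module.DirectLimit.exists_of z
      rw [hwof] at hz
      obtain ⟨j', hj', hx⟩ := heq i x 0 (by simpa using hz)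
      rw [← Module.DirectLimit.of_f (hij := hj') (x := x)]
      show Module.DirectLimit.of R J S gl j' (g i j' hj' x) = 0
      rw [hx]
      simp [gl]
    · intro b
      obtain ⟨i, x, rfl⟩ := hsurj b
      exact ⟨Module.DirectLimit.of R J S gl i x, hwof i x⟩
  let W := LinearEquiv.ofBijective w hwbij
  let E := TensorProduct.directLimitLeft gl M
  haveI : DirectedSystem (fun j => S j ⊗[R] M) (fun i j h => LinearMap.rTensor M (gl i j h)) := by
    constructor
    · intro i x
      have : gl i i le_rfl = LinearMap.id := LinearMap.ext fun t => hg₁ i t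
      rw [this, LinearMap.rTensor_id]; rfl
    · intro k j i hij hjk x
      exact rTensor_g_g g M hg₂ i j k hij hjk x
  have key : ∀ (t : S j ⊗[R] M),
      LinearMap.rTensor M w
        (E.symm (Module.DirectLimit.of R J (fun j => S j ⊗[R] M)
          (fun i j h => LinearMap.rTensor M (gl i j h)) j t))
      = LinearMap.rTensor M (v j).toLinearMap t := by
    intro t
    induction t with
    | zero => simp
    | tmul s m =>
        show LinearMap.rTensor M w
          ((TensorProduct.directLimitLeft gl M).symm (Module.DirectLimit.of R J _
            (fun i j h => LinearMap.rTensor M (gl i j h)) j (s ⊗ₜ m))) = _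
        rw [TensorProduct.directLimitLeft_symm_of_tmul]
        simp [hwof]
    | add a b ha hb => simp only [map_add, ha, hb]
  have hinj : Function.Injective (LinearMap.rTensor M w) :=
    (LinearEquiv.rTensor M W).injective
  have h2 : Module.DirectLimit.of R J (fun j => S j ⊗[R] M)
      (fun i j h => LinearMap.rTensor M (gl i j h)) j y = 0 := by
    have h1 : E.symm (Module.DirectLimit.of R J (fun j => S j ⊗[R] M)
        (fun i j h => LinearMap.rTensor M (gl i j h)) j y) = 0 := by
      apply hinj
      rw [key y, h0, map_zero]
    exact (LinearEquiv.map_eq_zero_iff E.symm).mp h1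
  obtain ⟨j', hjj', hz⟩ := Module.DirectLimit.of.zero_exact h2
  exact ⟨j', hjj', hz⟩

/-- Lifting a linear map between base-changed modules to a finite stage. -/
lemma exists_hom_lift
    (exA : ∀ (x : B ⊗[R] M), ∃ (j : J) (y : S j ⊗[R] M),
      LinearMap.rTensor M (v j).toLinearMap y = x)
    (exB : ∀ (j : J) (y : S j ⊗[R] M), LinearMap.rTensor M (v j).toLinearMap y = 0 →
      ∃ (j' : J) (h : j ≤ j'), LinearMap.rTensor M (g j j' h).toLinearMap y = 0)
    (hg₂ : ∀ (i j k : J) (hij : i ≤ j) (hjk : j ≤ k) (x : S i),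
      g j k hjk (g i j hij x) = g i k (hij.trans hjk) x)
    (hv : ∀ i j (h : i ≤ j) (x : S i), v j (g i j h x) = v i x)
    (F₀ : Type) [AddCommGroup F₀] [Module R F₀] [Module.FinitePresentation R F₀]
    (φ : (B ⊗[R] F₀) →ₗ[B] (B ⊗[R] M)) :
    ∃ (j : J) (Ψ : (S j ⊗[R] F₀) →ₗ[S j] (S j ⊗[R] M)),
      ∀ t, LinearMap.rTensor M (v j).toLinearMap (Ψ t)
        = φ (LinearMap.rTensor F₀ (v j).toLinearMap t) := by
  classical
  obtain ⟨sf, hspan, hfg⟩ := (‹Module.FinitePresentation R F₀› : Module.FinitePresentation R F₀).1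
  set p : (↥sf →₀ R) →ₗ[R] F₀ := Finsupp.linearCombination R ((↑) : sf → F₀) with hpdef
  have hp : Function.Surjective p := by
    apply LinearMap.range_eq_top.mp
    rw [hpdef, Finsupp.range_linearCombination, Subtype.range_coe_subtype, Finset.setOf_mem]
    exact hspan
  obtain ⟨T, hT⟩ := hfg
  -- lift the images of the generators
  have hlift : ∀ i : sf, ∃ (j : J) (y : S j ⊗[R] M),
      LinearMap.rTensor M (v j).toLinearMap y = φ ((1 : B) ⊗ₜ (i : F₀)) := fun i =>
    exA (φ ((1 : B) ⊗ₜ (i : F₀)))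
  choose jfun yfun hyfun using hlift
  obtain ⟨j₁, hj₁⟩ := (Finset.univ.image jfun).exists_le
  have hle : ∀ i : sf, jfun i ≤ j₁ := fun i =>
    hj₁ _ (Finset.mem_image_of_mem _ (Finset.mem_univ i))
  set y : sf → S j₁ ⊗[R] M :=
    fun i => LinearMap.rTensor M (g (jfun i) j₁ (hle i)).toLinearMap (yfun i) with hydef
  have hy₁ : ∀ i : sf, LinearMap.rTensor M (v j₁).toLinearMap (y i) = φ ((1:B) ⊗ₜ (i : F₀)) := by
    intro i
    rw [hydef]
    rw [rTensor_v_g g v M hv _ _ (hle i)]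
    exact hyfun i
  -- commuting identity at stage j₁
  have hcomm₁ : ∀ ξ : (↥sf →₀ R),
      LinearMap.rTensor M (v j₁).toLinearMap (Finsupp.linearCombination R y ξ)
        = φ ((1:B) ⊗ₜ p ξ) := by
    intro ξ
    induction ξ using Finsupp.induction_linear with
    | zero => simp
    | add f₁ f₂ h₁ h₂ =>
        rw [map_add, map_add, h₁, h₂, map_add, TensorProduct.tmul_add, map_add]
    | single a b =>
        rw [Finsupp.linearCombination_single, map_smul, hy₁ a,
          ← LinearMap.map_smul_of_tower φ b]
        congr 1
        rw [hpdef, Finsupp.linearCombination_single, TensorProduct.tmul_smul]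
  -- relations eventually die
  have hrel0 : ∀ t ∈ T, ∃ (j' : J) (h : j₁ ≤ j'),
      LinearMap.rTensor M (g j₁ j' h).toLinearMap (Finsupp.linearCombination R y t) = 0 := by
    intro t ht
    apply exB
    rw [hcomm₁]
    have hker : p t = 0 := by
      have : t ∈ LinearMap.ker p := by
        rw [← hT]; exact Submodule.subset_span ht
      simpa using this
    rw [hker]
    simp
  choose! jk hjk hk using hrel0
  obtain ⟨j₂, hj₂⟩ := (insert j₁ (T.attach.image fun t => jk t.1)).exists_le
  have hj₁₂ : j₁ ≤ j₂ := hj₂ _ (Finset.mem_insert_self _ _)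
  have hkle : ∀ t ∈ T, jk t ≤ j₂ := by
    intro t ht
    exact hj₂ _ (Finset.mem_insert_of_mem (Finset.mem_image_of_mem _ (T.mem_attach ⟨t, ht⟩)))
  set y' : sf → S j₂ ⊗[R] M :=
    fun i => LinearMap.rTensor M (g j₁ j₂ hj₁₂).toLinearMap (y i) with hy'def
  have hlc : ∀ ξ : (↥sf →₀ R), Finsupp.linearCombination R y' ξ
      = LinearMap.rTensor M (g j₁ j₂ hj₁₂).toLinearMap (Finsupp.linearCombination R y ξ) := by
    intro ξ
    rw [Finsupp.apply_linearCombination]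
    rfl
  have hrel' : ∀ t ∈ T, Finsupp.linearCombination R y' t = 0 := by
    intro t ht
    rw [hlc]
    have h2 : LinearMap.rTensor M (g j₁ j₂ hj₁₂).toLinearMap
        = LinearMap.rTensor M (g j₁ j₂ ((hjk t ht).trans (hkle t ht))).toLinearMap := rfl
    rw [h2, ← rTensor_g_g g M hg₂ j₁ (jk t) j₂ (hjk t ht) (hkle t ht), hk t ht, map_zero]
  have hker' : LinearMap.ker p ≤ LinearMap.ker (Finsupp.linearCombination R y') := by
    rw [← hT, Submodule.span_le]
    intro t ht
    exact hrel' t ht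
  set eqv := LinearMap.quotKerEquivOfSurjective p hp with heqv
  set c : F₀ →ₗ[R] (S j₂ ⊗[R] M) :=
    (Submodule.liftQ (LinearMap.ker p) (Finsupp.linearCombination R y') hker') ∘ₗ
      (eqv.symm : F₀ →ₗ[R] ((↥sf →₀ R) ⧸ LinearMap.ker p)) with hcdef
  have hc : ∀ ξ, c (p ξ) = Finsupp.linearCombination R y' ξ := by
    intro ξ
    have h1 : eqv (Submodule.Quotient.mk ξ) = p ξ := rfl
    rw [hcdef]
    show (Submodule.liftQ _ _ hker') (eqv.symm (p ξ)) = _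
    rw [← h1, LinearEquiv.symm_apply_apply, Submodule.liftQ_apply]
  refine ⟨j₂, c.liftBaseChange (S j₂), ?_⟩
  have hcomm₂ : ∀ ξ : (↥sf →₀ R),
      LinearMap.rTensor M (v j₂).toLinearMap (Finsupp.linearCombination R y' ξ)
        = φ ((1:B) ⊗ₜ p ξ) := by
    intro ξ
    rw [hlc, rTensor_v_g g v M hv j₁ j₂ hj₁₂, hcomm₁]
  intro t
  induction t with
  | zero => simp
  | tmul s x =>
      obtain ⟨ξ, rfl⟩ := hp x
      rw [LinearMap.liftBaseChange_tmul, hc, rTensor_smul_alg (v j₂) s, hcomm₂ ξ]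
      rw [LinearMap.rTensor_tmul]
      have h3 : ((v j₂).toLinearMap s) ⊗ₜ[R] (p ξ) = (v j₂) s • ((1:B) ⊗ₜ[R] p ξ) := by
        rw [TensorProduct.smul_tmul', smul_eq_mul, mul_one]; rfl
      rw [h3, map_smul]
  | add a b ha hb => rw [map_add, map_add, ha, hb, map_add, map_add]


/-- Pushing a stage-`j` map to a later stage `j'`. -/
lemma push_spec (j j' : J) (h : j ≤ j')
    (F₀ : Type) [AddCommGroup F₀] [Module R F₀]
    (Ψ : (S j ⊗[R] F₀) →ₗ[S j] (S j ⊗[R] M)) :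
    ∃ Ψ' : (S j' ⊗[R] F₀) →ₗ[S j'] (S j' ⊗[R] M),
      ∀ t, Ψ' (LinearMap.rTensor F₀ (g j j' h).toLinearMap t)
        = LinearMap.rTensor M (g j j' h).toLinearMap (Ψ t) := by
  let c : F₀ →ₗ[R] S j' ⊗[R] M :=
    (LinearMap.rTensor M (g j j' h).toLinearMap) ∘ₗ (Ψ.restrictScalars R) ∘ₗ
      ((TensorProduct.mk R (S j) F₀) 1)
  refine ⟨c.liftBaseChange (S j'), ?_⟩
  intro t
  induction t with
  | zero => simp
  | tmul s x =>
      rw [LinearMap.rTensor_tmul, LinearMap.liftBaseChange_tmul]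
      have h1 : Ψ (s ⊗ₜ x) = s • Ψ ((1 : S j) ⊗ₜ x) := by
        rw [← map_smul, TensorProduct.smul_tmul', smul_eq_mul, mul_one]
      rw [h1, rTensor_smul_alg (g j j' h) s]
      rfl
  | add a b ha hb => rw [map_add, map_add, ha, hb, map_add, map_add]

/-- Compatibility with the colimit map transfers along pushes. -/
lemma push_compat
    (hv : ∀ i j (h : i ≤ j) (x : S i), v j (g i j h x) = v i x)
    (F₀ : Type) [AddCommGroup F₀] [Module R F₀]
    (φ : (B ⊗[R] F₀) →ₗ[B] (B ⊗[R] M)) (j j' : J) (h : j ≤ j')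
    (Ψ : (S j ⊗[R] F₀) →ₗ[S j] (S j ⊗[R] M))
    (hΨ : ∀ t, LinearMap.rTensor M (v j).toLinearMap (Ψ t)
      = φ (LinearMap.rTensor F₀ (v j).toLinearMap t))
    (Ψ' : (S j' ⊗[R] F₀) →ₗ[S j'] (S j' ⊗[R] M))
    (hΨ' : ∀ t, Ψ' (LinearMap.rTensor F₀ (g j j' h).toLinearMap t)
      = LinearMap.rTensor M (g j j' h).toLinearMap (Ψ t)) :
    ∀ t, LinearMap.rTensor M (v j').toLinearMap (Ψ' t)
      = φ (LinearMap.rTensor F₀ (v j').toLinearMap t) := by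
  intro t
  induction t with
  | zero => simp
  | tmul s x =>
      have h1 : (s ⊗ₜ[R] x : S j' ⊗[R] F₀)
          = s • LinearMap.rTensor F₀ (g j j' h).toLinearMap ((1 : S j) ⊗ₜ x) := by
        rw [LinearMap.rTensor_tmul, TensorProduct.smul_tmul', smul_eq_mul]
        have : ((g j j' h).toLinearMap (1 : S j) : S j') = 1 := map_one (g j j' h)
        rw [this, mul_one]
      rw [h1, map_smul, hΨ', rTensor_smul_alg (v j') s, rTensor_v_g g v M hv j j' h, hΨ]
      rw [← map_smul]
      congr 1
      rw [rTensor_smul_alg (v j') s, rTensor_v_g g v F₀ hv j j' h]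
  | add a b ha hb => rw [map_add, map_add, ha, hb, map_add, map_add]

/-- Two maps equal after base change to the colimit are equal at a later stage. -/
lemma eventually_eq
    (hg₂ : ∀ (i j k : J) (hij : i ≤ j) (hjk : j ≤ k) (x : S i),
      g j k hjk (g i j hij x) = g i k (hij.trans hjk) x)
    (exB : ∀ (j : J) (y : S j ⊗[R] M), LinearMap.rTensor M (v j).toLinearMap y = 0 →
      ∃ (j' : J) (h : j ≤ j'), LinearMap.rTensor M (g j j' h).toLinearMap y = 0)
    (F₀ : Type) [AddCommGroup F₀] [Module R F₀] [Module.Finite R F₀]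
    (j : J) (Ψ₁ Ψ₂ : (S j ⊗[R] F₀) →ₗ[S j] (S j ⊗[R] M))
    (hΨ : ∀ t, LinearMap.rTensor M (v j).toLinearMap (Ψ₁ t)
      = LinearMap.rTensor M (v j).toLinearMap (Ψ₂ t)) :
    ∃ (j' : J) (h : j ≤ j'), ∀ t,
      LinearMap.rTensor M (g j j' h).toLinearMap (Ψ₁ t)
        = LinearMap.rTensor M (g j j' h).toLinearMap (Ψ₂ t) := by
  classical
  obtain ⟨sF, hsF⟩ := Module.Finite.fg_top (R := R) (M := F₀)
  have hd : ∀ x : F₀, x ∈ sF → ∃ (j' : J) (h : j ≤ j'),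
      LinearMap.rTensor M (g j j' h).toLinearMap
        ((Ψ₁ - Ψ₂) ((1 : S j) ⊗ₜ x)) = 0 := by
    intro x hx
    apply exB
    rw [LinearMap.sub_apply, map_sub, hΨ, sub_self]
  choose! jf hjf hjf0 using hd
  obtain ⟨j', hj'⟩ := (insert j (sF.attach.image fun x => jf x.1)).exists_le
  have hjj' : j ≤ j' := hj' _ (Finset.mem_insert_self _ _)
  have hb : ∀ x ∈ sF, jf x ≤ j' := fun x hx =>
    hj' _ (Finset.mem_insert_of_mem (Finset.mem_image_of_mem _ (sF.mem_attach ⟨x, hx⟩)))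
  have hgen : ∀ x : F₀, LinearMap.rTensor M (g j j' hjj').toLinearMap
      ((Ψ₁ - Ψ₂) ((1 : S j) ⊗ₜ x)) = 0 := by
    set L : F₀ →ₗ[R] S j' ⊗[R] M :=
      (LinearMap.rTensor M (g j j' hjj').toLinearMap) ∘ₗ
        ((Ψ₁ - Ψ₂).restrictScalars R) ∘ₗ ((TensorProduct.mk R (S j) F₀) 1) with hL
    intro x
    have htop : ⊤ ≤ LinearMap.ker L := by
      rw [← hsF, Submodule.span_le]
      intro z hz
      have hz' : z ∈ sF := hz
      show L z = 0
      rw [hL]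
      simp only [LinearMap.comp_apply, TensorProduct.mk_apply, LinearMap.restrictScalars_apply]
      have h2 : LinearMap.rTensor M (g j j' ((hjf z hz').trans (hb z hz'))).toLinearMap
          ((Ψ₁ - Ψ₂) ((1 : S j) ⊗ₜ z)) = 0 := by
        rw [← rTensor_g_g g M hg₂ j (jf z) j' (hjf z hz') (hb z hz'), hjf0 z hz', map_zero]
      exact h2
    have hx : L x = 0 := htop (Submodule.mem_top) 
    rw [hL] at hx
    simpa only [LinearMap.comp_apply, TensorProduct.mk_apply,
      LinearMap.restrictScalars_apply] using hx
  refine ⟨j', hjj', ?_⟩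
  intro t
  rw [← sub_eq_zero, ← map_sub, ← LinearMap.sub_apply]
  induction t with
  | zero => simp
  | tmul s x =>
      have h1 : (Ψ₁ - Ψ₂) (s ⊗ₜ x) = s • (Ψ₁ - Ψ₂) ((1 : S j) ⊗ₜ x) := by
        rw [← map_smul, TensorProduct.smul_tmul', smul_eq_mul, mul_one]
      rw [h1, rTensor_smul_alg (g j j' hjj') s, hgen x, smul_zero]
  | add a b ha hb => rw [map_add, map_add, ha, hb, add_zero]


/-- Main auxiliary result: an isomorphism after base change to the colimit descends
to an isomorphism at some finite stage. -/
lemma exists_iso_stage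
    (hg₁ : ∀ i x, g i i le_rfl x = x)
    (hg₂ : ∀ (i j k : J) (hij : i ≤ j) (hjk : j ≤ k) (x : S i),
      g j k hjk (g i j hij x) = g i k (hij.trans hjk) x)
    (hv : ∀ i j (h : i ≤ j) (x : S i), v j (g i j h x) = v i x)
    (hsurj : ∀ b : B, ∃ j x, v j x = b)
    (heq : ∀ j (x y : S j), v j x = v j y → ∃ (j' : J) (h : j ≤ j'),
      g j j' h x = g j j' h y)
    (F₀ F₁ : Type) [AddCommGroup F₀] [Module R F₀] [Module.FinitePresentation R F₀]
    [AddCommGroup F₁] [Module R F₁] [Module.FinitePresentation R F₁]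
    (e : (B ⊗[R] F₀) ≃ₗ[B] (B ⊗[R] F₁)) :
    ∃ j : J, Nonempty ((S j ⊗[R] F₀) ≃ₗ[S j] (S j ⊗[R] F₁)) := by
  have exA₀ := exists_rTensor_eq g v F₀ hv hsurj
  have exA₁ := exists_rTensor_eq g v F₁ hv hsurj
  have exB₀ := rTensor_zero_exact g v F₀ hg₁ hg₂ hv hsurj heq
  have exB₁ := rTensor_zero_exact g v F₁ hg₁ hg₂ hv hsurj heq
  obtain ⟨j₀, Ψ₀, hΨ₀⟩ := exists_hom_lift g v F₁ exA₁ exB₁ hg₂ hv F₀ e.toLinearMap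
  obtain ⟨j₁, Φ₀, hΦ₀⟩ := exists_hom_lift g v F₀ exA₀ exB₀ hg₂ hv F₁ e.symm.toLinearMap
  obtain ⟨j₂, h₀₂, h₁₂⟩ := directed_of (· ≤ ·) j₀ j₁
  obtain ⟨Ψ, hΨpush⟩ := push_spec g F₁ j₀ j₂ h₀₂ F₀ Ψ₀
  have hΨc := push_compat g v F₁ hv F₀ e.toLinearMap j₀ j₂ h₀₂ Ψ₀ hΨ₀ Ψ hΨpush
  obtain ⟨Φ, hΦpush⟩ := push_spec g F₀ j₁ j₂ h₁₂ F₁ Φ₀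
  have hΦc := push_compat g v F₀ hv F₁ e.symm.toLinearMap j₁ j₂ h₁₂ Φ₀ hΦ₀ Φ hΦpush
  -- the composites are compatible with the identity
  have hC : ∀ t : S j₂ ⊗[R] F₀,
      LinearMap.rTensor F₀ (v j₂).toLinearMap ((Φ ∘ₗ Ψ) t)
        = LinearMap.rTensor F₀ (v j₂).toLinearMap t := by
    intro t
    rw [LinearMap.comp_apply, hΦc (Ψ t), hΨc t]
    simp
  have hD : ∀ t : S j₂ ⊗[R] F₁,
      LinearMap.rTensor F₁ (v j₂).toLinearMap ((Ψ ∘ₗ Φ) t)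
        = LinearMap.rTensor F₁ (v j₂).toLinearMap t := by
    intro t
    rw [LinearMap.comp_apply, hΨc (Φ t), hΦc t]
    simp
  obtain ⟨j₃, h₂₃, hC3⟩ := eventually_eq g v F₀ hg₂ exB₀ F₀ j₂ (Φ ∘ₗ Ψ) LinearMap.id hC
  obtain ⟨j₄, h₂₄, hD4⟩ := eventually_eq g v F₁ hg₂ exB₁ F₁ j₂ (Ψ ∘ₗ Φ) LinearMap.id hD
  obtain ⟨j₅, h₃₅, h₄₅⟩ := directed_of (· ≤ ·) j₃ j₄
  have h₂₅ : j₂ ≤ j₅ := h₂₃.trans h₃₅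
  obtain ⟨Ψ', hΨ'⟩ := push_spec g F₁ j₂ j₅ h₂₅ F₀ Ψ
  obtain ⟨Φ', hΦ'⟩ := push_spec g F₀ j₂ j₅ h₂₅ F₁ Φ
  -- key transported identities
  have hCkey : ∀ u : S j₂ ⊗[R] F₀,
      LinearMap.rTensor F₀ (g j₂ j₅ h₂₅).toLinearMap (Φ (Ψ u))
        = LinearMap.rTensor F₀ (g j₂ j₅ h₂₅).toLinearMap u := by
    intro u
    have h2 := rTensor_g_g g F₀ hg₂ j₂ j₃ j₅ h₂₃ h₃₅
    calc LinearMap.rTensor F₀ (g j₂ j₅ h₂₅).toLinearMap (Φ (Ψ u))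
        = LinearMap.rTensor F₀ (g j₃ j₅ h₃₅).toLinearMap
            (LinearMap.rTensor F₀ (g j₂ j₃ h₂₃).toLinearMap ((Φ ∘ₗ Ψ) u)) := (h2 _).symm
      _ = LinearMap.rTensor F₀ (g j₃ j₅ h₃₅).toLinearMap
            (LinearMap.rTensor F₀ (g j₂ j₃ h₂₃).toLinearMap u) := by rw [hC3 u]; rfl
      _ = LinearMap.rTensor F₀ (g j₂ j₅ h₂₅).toLinearMap u := h2 u
  have hDkey : ∀ u : S j₂ ⊗[R] F₁,
      LinearMap.rTensor F₁ (g j₂ j₅ h₂₅).toLinearMap (Ψ (Φ u))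
        = LinearMap.rTensor F₁ (g j₂ j₅ h₂₅).toLinearMap u := by
    intro u
    have h2 := rTensor_g_g g F₁ hg₂ j₂ j₄ j₅ h₂₄ h₄₅
    calc LinearMap.rTensor F₁ (g j₂ j₅ h₂₅).toLinearMap (Ψ (Φ u))
        = LinearMap.rTensor F₁ (g j₄ j₅ h₄₅).toLinearMap
            (LinearMap.rTensor F₁ (g j₂ j₄ h₂₄).toLinearMap ((Ψ ∘ₗ Φ) u)) := (h2 _).symm
      _ = LinearMap.rTensor F₁ (g j₄ j₅ h₄₅).toLinearMap
            (LinearMap.rTensor F₁ (g j₂ j₄ h₂₄).toLinearMap u) := by rw [hD4 u]; rfl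
      _ = LinearMap.rTensor F₁ (g j₂ j₅ h₂₅).toLinearMap u := h2 u
  have hid₁ : ∀ t : S j₅ ⊗[R] F₀, Φ' (Ψ' t) = t := by
    intro t
    induction t with
    | zero => simp
    | tmul s x =>
        have h1 : (s ⊗ₜ[R] x : S j₅ ⊗[R] F₀)
            = s • LinearMap.rTensor F₀ (g j₂ j₅ h₂₅).toLinearMap ((1 : S j₂) ⊗ₜ x) := by
          rw [LinearMap.rTensor_tmul, TensorProduct.smul_tmul', smul_eq_mul]
          have hone : ((g j₂ j₅ h₂₅).toLinearMap (1 : S j₂) : S j₅) = 1 := map_one (g j₂ j₅ h₂₅)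
          rw [hone, mul_one]
        rw [h1, map_smul, hΨ', map_smul, hΦ' (Ψ ((1 : S j₂) ⊗ₜ x)), hCkey ((1 : S j₂) ⊗ₜ x)]
    | add a b ha hb => rw [map_add, map_add, ha, hb]
  have hid₂ : ∀ t : S j₅ ⊗[R] F₁, Ψ' (Φ' t) = t := by
    intro t
    induction t with
    | zero => simp
    | tmul s x =>
        have h1 : (s ⊗ₜ[R] x : S j₅ ⊗[R] F₁)
            = s • LinearMap.rTensor F₁ (g j₂ j₅ h₂₅).toLinearMap ((1 : S j₂) ⊗ₜ x) := by
          rw [LinearMap.rTensor_tmul, TensorProduct.smul_tmul', smul_eq_mul]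
          have hone : ((g j₂ j₅ h₂₅).toLinearMap (1 : S j₂) : S j₅) = 1 := map_one (g j₂ j₅ h₂₅)
          rw [hone, mul_one]
        rw [h1, map_smul, hΦ', map_smul, hΨ' (Φ ((1 : S j₂) ⊗ₜ x)), hDkey ((1 : S j₂) ⊗ₜ x)]
    | add a b ha hb => rw [map_add, map_add, ha, hb]
  exact ⟨j₅, ⟨LinearEquiv.ofLinear Ψ' Φ' (LinearMap.ext hid₂) (LinearMap.ext hid₁)⟩⟩

end System

end FPModel

/-- `B`, together with the canonical maps `u i : A i →+* B`, is the direct limit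
(filtered colimit) of the filtered direct system of commutative rings
`{A i, f i j : A i →+* A j (i ≤ j)}` indexed by the directed set `I`. -/
structure IsFilteredRingColimit {I : Type*} [Preorder I]
    (A : I → Type*) [∀ i, CommRing (A i)]
    (f : ∀ i j, i ≤ j → (A i →+* A j))
    (B : Type*) [CommRing B] (u : ∀ i, A i →+* B) : Prop where
  directed : ∀ i j : I, ∃ k, i ≤ k ∧ j ≤ k
  map_self : ∀ i (x : A i), f i i le_rfl x = x
  map_map : ∀ (i j k : I) (hij : i ≤ j) (hjk : j ≤ k) (x : A i),
    f j k hjk (f i j hij x) = f i k (hij.trans hjk) x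
  compat : ∀ i j (h : i ≤ j) (x : A i), u j (f i j h x) = u i x
  exhaust : ∀ b : B, ∃ (i : I) (x : A i), u i x = b
  eq_stage : ∀ i (x y : A i), u i x = u i y → ∃ (j : I) (h : i ≤ j), f i j h x = f i j h y


/-- **Essential uniqueness of finitely presented models.**
Let `{A i}` be a filtered direct system of commutative rings with direct limit `B`.
If `E` is a finitely presented `B`-module which arises by base change both from a
finitely presented `A i₀`-module `E₀` and from a finitely presented `A i₁`-module
`E₁`, then `E₀` and `E₁` become isomorphic after extension of scalars to some
`A i₂` with `i₂ ≥ i₀` and `i₂ ≥ i₁`. -/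
theorem finitePresentation_module_model_essentially_unique
    {I : Type} [Preorder I] (A : I → Type) [∀ i, CommRing (A i)]
    (f : ∀ i j, i ≤ j → (A i →+* A j))
    (B : Type) [CommRing B] (u : ∀ i, A i →+* B)
    (hcolim : IsFilteredRingColimit A f B u)
    (E : Type) [AddCommGroup E] [Module B E] [Module.FinitePresentation B E]
    (i₀ i₁ : I)
    (E₀ : Type) [AddCommGroup E₀] [Module (A i₀) E₀] [Module.FinitePresentation (A i₀) E₀]
    (E₁ : Type) [AddCommGroup E₁] [Module (A i₁) E₁] [Module.FinitePresentation (A i₁) E₁]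
    (h₀ : Nonempty (letI := (u i₀).toAlgebra; (B ⊗[A i₀] E₀) ≃ₗ[B] E))
    (h₁ : Nonempty (letI := (u i₁).toAlgebra; (B ⊗[A i₁] E₁) ≃ₗ[B] E)) :
    ∃ (i₂ : I) (hi₀ : i₀ ≤ i₂) (hi₁ : i₁ ≤ i₂),
      Nonempty (letI := (f i₀ i₂ hi₀).toAlgebra; letI := (f i₁ i₂ hi₁).toAlgebra;
        ((A i₂) ⊗[A i₀] E₀) ≃ₗ[A i₂] ((A i₂) ⊗[A i₁] E₁)) := by

  obtain ⟨e₀⟩ := h₀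
  obtain ⟨e₁⟩ := h₁
  obtain ⟨k, hk₀, hk₁⟩ := hcolim.directed i₀ i₁
  letI : Algebra (A i₀) (A k) := (f i₀ k hk₀).toAlgebra
  letI : Algebra (A i₁) (A k) := (f i₁ k hk₁).toAlgebra
  letI : Algebra (A i₀) B := (u i₀).toAlgebra
  letI : Algebra (A i₁) B := (u i₁).toAlgebra
  letI : Algebra (A k) B := (u k).toAlgebra
  haveI t₀ : IsScalarTower (A i₀) (A k) B := IsScalarTower.of_algebraMap_eq fun x =>
    (hcolim.compat i₀ k hk₀ x).symm
  haveI t₁ : IsScalarTower (A i₁) (A k) B := IsScalarTower.of_algebraMap_eq fun x =>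
    (hcolim.compat i₁ k hk₁ x).symm
  haveI : Nonempty {j : I // k ≤ j} := ⟨⟨k, le_rfl⟩⟩
  haveI : IsDirected {j : I // k ≤ j} (· ≤ ·) := ⟨fun a b => by
    obtain ⟨c, hac, hbc⟩ := hcolim.directed a.1 b.1
    exact ⟨⟨c, le_trans a.2 hac⟩, hac, hbc⟩⟩
  letI : ∀ j : {j : I // k ≤ j}, Algebra (A k) (A j.1) := fun j => (f k j.1 j.2).toAlgebra
  let g' : ∀ a b : {j : I // k ≤ j}, a ≤ b → (A a.1 →ₐ[A k] A b.1) := fun a b hab =>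
    { toRingHom := f a.1 b.1 hab
      commutes' := fun r => hcolim.map_map k a.1 b.1 a.2 hab r }
  let v' : ∀ j : {j : I // k ≤ j}, (A j.1 →ₐ[A k] B) := fun j =>
    { toRingHom := u j.1
      commutes' := fun r => hcolim.compat k j.1 j.2 r }
  have hg₁' : ∀ (a : {j : I // k ≤ j}) x, g' a a le_rfl x = x := fun a x =>
    hcolim.map_self a.1 x
  have hg₂' : ∀ (a b c : {j : I // k ≤ j}) (hab : a ≤ b) (hbc : b ≤ c) (x : A a.1),
      g' b c hbc (g' a b hab x) = g' a c (hab.trans hbc) x := fun a b c hab hbc x =>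
    hcolim.map_map a.1 b.1 c.1 hab hbc x
  have hv' : ∀ (a b : {j : I // k ≤ j}) (hab : a ≤ b) (x : A a.1),
      v' b (g' a b hab x) = v' a x := fun a b hab x => hcolim.compat a.1 b.1 hab x
  have hsurj' : ∀ b : B, ∃ (j : {j : I // k ≤ j}) (x : A j.1), v' j x = b := by
    intro b
    obtain ⟨i, x, hx⟩ := hcolim.exhaust b
    obtain ⟨m, him, hkm⟩ := hcolim.directed i k
    refine ⟨⟨m, hkm⟩, f i m him x, ?_⟩
    show u m (f i m him x) = b
    rw [hcolim.compat i m him x, hx]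
  have heq' : ∀ (j : {j : I // k ≤ j}) (x y : A j.1), v' j x = v' j y →
      ∃ (j' : {j : I // k ≤ j}) (h : j ≤ j'), g' j j' h x = g' j j' h y := by
    intro j x y hxy
    obtain ⟨l, hl, hxy'⟩ := hcolim.eq_stage j.1 x y hxy
    exact ⟨⟨l, le_trans j.2 hl⟩, hl, hxy'⟩
  haveI : Module.FinitePresentation (A k) ((A k) ⊗[A i₀] E₀) := inferInstance
  haveI : Module.FinitePresentation (A k) ((A k) ⊗[A i₁] E₁) := inferInstance
  let c₀ : B ⊗[A k] ((A k) ⊗[A i₀] E₀) ≃ₗ[B] B ⊗[A i₀] E₀ :=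
    TensorProduct.AlgebraTensorModule.cancelBaseChange (A i₀) (A k) B B E₀
  let c₁ : B ⊗[A k] ((A k) ⊗[A i₁] E₁) ≃ₗ[B] B ⊗[A i₁] E₁ :=
    TensorProduct.AlgebraTensorModule.cancelBaseChange (A i₁) (A k) B B E₁
  let e : (B ⊗[A k] ((A k) ⊗[A i₀] E₀)) ≃ₗ[B] (B ⊗[A k] ((A k) ⊗[A i₁] E₁)) :=
    c₀ ≪≫ₗ e₀ ≪≫ₗ e₁.symm ≪≫ₗ c₁.symm
  obtain ⟨j, ⟨iso⟩⟩ := FPModel.exists_iso_stage g' v' hg₁' hg₂' hv' hsurj' heq'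
    ((A k) ⊗[A i₀] E₀) ((A k) ⊗[A i₁] E₁) e
  refine ⟨j.1, le_trans hk₀ j.2, le_trans hk₁ j.2, ?_⟩
  letI : Algebra (A i₀) (A j.1) := (f i₀ j.1 (le_trans hk₀ j.2)).toAlgebra
  letI : Algebra (A i₁) (A j.1) := (f i₁ j.1 (le_trans hk₁ j.2)).toAlgebra
  haveI : IsScalarTower (A i₀) (A k) (A j.1) := IsScalarTower.of_algebraMap_eq fun x =>
    (hcolim.map_map i₀ k j.1 hk₀ j.2 x).symm
  haveI : IsScalarTower (A i₁) (A k) (A j.1) := IsScalarTower.of_algebraMap_eq fun x =>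
    (hcolim.map_map i₁ k j.1 hk₁ j.2 x).symm
  let d₀ : (A j.1) ⊗[A k] ((A k) ⊗[A i₀] E₀) ≃ₗ[A j.1] (A j.1) ⊗[A i₀] E₀ :=
    TensorProduct.AlgebraTensorModule.cancelBaseChange (A i₀) (A k) (A j.1) (A j.1) E₀
  let d₁ : (A j.1) ⊗[A k] ((A k) ⊗[A i₁] E₁) ≃ₗ[A j.1] (A j.1) ⊗[A i₁] E₁ :=
    TensorProduct.AlgebraTensorModule.cancelBaseChange (A i₁) (A k) (A j.1) (A j.1) E₁
  exact ⟨d₀.symm ≪≫ₗ iso ≪≫ₗ d₁⟩
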